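/- Let (Ω, 𝓕, μ) be a probability space, T : Ω → Ω measurable with T_*μ ≪ μ, and let ρ : Ω → ℝ be a nonnegative measurable function with ∫ ρ dμ = 1 such that ∫ f dμ = ∫ (f ∘ T)·ρ dμ for every bounded measurable f : Ω → ℝ. If H(T_*μ|μ) < ∞, then log 𝔼_μ[ρ | σ(T)] ∈ L¹(μ) and H(T_*μ|μ) = −∫ log 𝔼_μ[ρ | σ(T)] dμ, where σ(T) = T⁻¹(𝓕). -/

import Mathlib

open MeasureTheory Filter
open scoped Classical ENNReal NNReal

/-- Relative entropy (Kullback–Leibler divergence) `H(θ|μ)`, valued in the extended reals: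
`H(θ|μ) = ∫ (dθ/dμ)·log(dθ/dμ) dμ` if `θ ≪ μ` and this integral is defined, `+∞` otherwise. -/
noncomputable def relEntropy {Ω : Type*} [MeasurableSpace Ω] (θ μ : Measure Ω) : EReal :=
  if θ ≪ μ ∧ Integrable (fun x => (θ.rnDeriv μ x).toReal * Real.log (θ.rnDeriv μ x).toReal) μ
  then ((∫ x, (θ.rnDeriv μ x).toReal * Real.log (θ.rnDeriv μ x).toReal ∂μ : ℝ) : EReal)
  else ⊤

theorem stmt_7 {Ω : Type*} [m : MeasurableSpace Ω] (μ : Measure Ω) [IsProbabilityMeasure μ]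
    (T : Ω → Ω) (hT : Measurable T) (hac : μ.map T ≪ μ)
    (ρ : Ω → ℝ) (hρm : Measurable ρ) (hρ0 : 0 ≤ ρ) (hρ1 : ∫ x, ρ x ∂μ = 1)
    (hchg : ∀ f : Ω → ℝ, Measurable f → (∃ C, ∀ x, |f x| ≤ C) →
      ∫ x, f x ∂μ = ∫ x, f (T x) * ρ x ∂μ)
    (hfin : relEntropy (μ.map T) μ < ⊤) :
    Integrable (fun x => Real.log ((μ[ρ | MeasurableSpace.comap T m]) x)) μ ∧
      relEntropy (μ.map T) μ =
        ((-∫ x, Real.log ((μ[ρ | MeasurableSpace.comap T m]) x) ∂μ : ℝ) : EReal) := by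
  have hm' : MeasurableSpace.comap T m ≤ m := hT.comap_le
  haveI : IsProbabilityMeasure (μ.map T) := Measure.isProbabilityMeasure_map hT.aemeasurable
  set g : Ω → ℝ≥0∞ := (μ.map T).rnDeriv μ with hgdef
  have hgm : Measurable g := Measure.measurable_rnDeriv _ _
  have hmapμ : μ.withDensity g = μ.map T := Measure.withDensity_rnDeriv_eq _ _ hac
  -- integrability of the entropy integrand
  have hint : Integrable (fun x => (g x).toReal * Real.log ((g x).toReal)) μ := by
    by_contra h
    rw [relEntropy, if_neg (fun hc => h hc.2)] at hfin
    exact lt_irrefl _ hfin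
  -- integrability of ρ
  have hρint : Integrable ρ μ := by
    by_contra h
    rw [integral_undef h] at hρ1; exact zero_ne_one hρ1
  -- μ ≪ μ.map T
  have hμac : μ ≪ μ.map T := by
    refine Measure.AbsolutelyContinuous.mk fun A hA hA0 => ?_
    have hTA : μ (T ⁻¹' A) = 0 := by rwa [Measure.map_apply hT hA] at hA0
    have hb : ∃ C, ∀ x, |A.indicator (fun _ => (1:ℝ)) x| ≤ C :=
      ⟨1, fun x => by by_cases hx : x ∈ A <;> simp [hx]⟩
    have h1 := hchg (A.indicator fun _ => 1) (measurable_const.indicator hA) hb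
    have h2 : (fun x => A.indicator (fun _ => (1:ℝ)) (T x) * ρ x) =ᵐ[μ] 0 := by
      have hae : ∀ᵐ x ∂μ, x ∉ T ⁻¹' A := measure_eq_zero_iff_ae_notMem.mp hTA
      filter_upwards [hae] with x hx
      simp only [Pi.zero_apply, mul_eq_zero]
      exact Or.inl (Set.indicator_of_notMem (s := A) (a := T x) hx _)
    rw [integral_congr_ae h2] at h1
    simp only [Pi.zero_apply, integral_zero] at h1
    have hLHS : ∫ x, A.indicator (fun _ => (1:ℝ)) x ∂μ = (μ A).toReal :=
      integral_indicator_one hA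
    have h3 : (μ A).toReal = 0 := by rw [← hLHS]; exact h1
    exact (ENNReal.toReal_eq_zero_iff _).mp h3 |>.resolve_right (measure_ne_top μ A)
  have hg0 : ∀ᵐ x ∂μ, 0 < g x := Measure.rnDeriv_pos' hμac
  have hglt : ∀ᵐ x ∂μ, g x < ∞ := Measure.rnDeriv_lt_top _ _
  have hG : ∀ᵐ x ∂μ, ((g x).toReal)⁻¹ * (g x).toReal = 1 := by
    filter_upwards [hg0, hglt] with x h1 h2
    exact inv_mul_cancel₀ (ENNReal.toReal_ne_zero.mpr ⟨h1.ne', h2.ne⟩)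
  have hgNN : μ.withDensity g = μ.withDensity (fun x => ((g x).toNNReal : ℝ≥0∞)) := by
    apply withDensity_congr_ae
    filter_upwards [hglt] with x hx
    rw [ENNReal.coe_toNNReal hx.ne]
  set c : Ω → ℝ := fun x => ((g (T x)).toReal)⁻¹ with hcdef
  have hGm : Measurable fun y => ((g y).toReal)⁻¹ := hgm.ennreal_toReal.inv
  have hcint : Integrable c μ := by
    have h1 : Integrable (fun y => ((g y).toReal)⁻¹) (μ.map T) := by
      rw [← hmapμ, integrable_withDensity_iff hgm hglt]
      exact (integrable_const (1:ℝ)).congr (by filter_upwards [hG] with x hx; exact hx.symm)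
    exact (integrable_map_measure hGm.aestronglyMeasurable hT.aemeasurable).mp h1
  -- set integrals agree
  have hseq : ∀ s : Set Ω, MeasurableSet[MeasurableSpace.comap T m] s → μ s < ∞ →
      ∫ x in s, c x ∂μ = ∫ x in s, ρ x ∂μ := by
    rintro s ⟨A, hA, rfl⟩ -
    have hρside : ∫ x in T ⁻¹' A, ρ x ∂μ = (μ A).toReal := by
      have hb : ∃ C, ∀ x, |A.indicator (fun _ => (1:ℝ)) x| ≤ C :=
        ⟨1, fun x => by by_cases hx : x ∈ A <;> simp [hx]⟩
      have h1 := hchg (A.indicator fun _ => 1) (measurable_const.indicator hA) hb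
      have hLHS : ∫ x, A.indicator (fun _ => (1:ℝ)) x ∂μ = (μ A).toReal :=
        integral_indicator_one hA
      rw [← hLHS, h1, ← integral_indicator (hT hA)]
      congr 1
      funext x
      by_cases hx : T x ∈ A
      · simp [Set.indicator_of_mem, hx, Set.mem_preimage.mpr hx]
      · simp [Set.indicator_of_notMem, hx, fun h => hx (Set.mem_preimage.mp h)]
    have hcside : ∫ x in T ⁻¹' A, c x ∂μ = (μ A).toReal := by
      rw [hcdef]
      rw [← setIntegral_map hA hGm.aestronglyMeasurable hT.aemeasurable]
      rw [← hmapμ, hgNN, restrict_withDensity hA,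
        integral_withDensity_eq_integral_smul (hgm.ennreal_toNNReal) _]
      have : ∫ y in A, (g y).toNNReal • ((g y).toReal)⁻¹ ∂μ = ∫ y in A, (1:ℝ) ∂μ := by
        apply integral_congr_ae
        filter_upwards [ae_restrict_of_ae hG] with y hy
        simpa [NNReal.smul_def, ENNReal.coe_toNNReal_eq_toReal, mul_comm] using hy
      rw [this]
      simp [measure_ne_top, Measure.real]
    rw [hρside, hcside]
  haveI : SigmaFinite (μ.trim hm') := by
    haveI : IsFiniteMeasure (μ.trim hm') := isFiniteMeasure_trim hm'
    infer_instance
  have hcm' : Measurable[MeasurableSpace.comap T m] c := by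
    have hTm : Measurable[MeasurableSpace.comap T m] T := Measurable.of_comap_le le_rfl
    exact hGm.comp hTm
  have hce : c =ᵐ[μ] μ[ρ | MeasurableSpace.comap T m] :=
    ae_eq_condExp_of_forall_setIntegral_eq hm' hρint
      (fun s _ _ => hcint.integrableOn) hseq
      (hcm'.stronglyMeasurable.aestronglyMeasurable )
  -- log of conditional expectation
  have hlogc : (fun x => Real.log ((μ[ρ | MeasurableSpace.comap T m]) x)) =ᵐ[μ]
      fun x => -Real.log ((g (T x)).toReal) := by
    filter_upwards [hce] with x hx
    rw [← hx, hcdef]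
    exact Real.log_inv _
  have hlogint1 : Integrable (fun y => Real.log ((g y).toReal)) (μ.map T) := by
    rw [← hmapμ, integrable_withDensity_iff hgm hglt]
    exact hint.congr (by filter_upwards with x; rw [mul_comm])
  have hlogint2 : Integrable (fun x => Real.log ((g (T x)).toReal)) μ :=
    (integrable_map_measure (hgm.ennreal_toReal.log).aestronglyMeasurable
      hT.aemeasurable).mp hlogint1
  have hintgoal : Integrable (fun x => Real.log ((μ[ρ | MeasurableSpace.comap T m]) x)) μ :=
    hlogint2.neg.congr hlogc.symm
  refine ⟨hintgoal, ?_⟩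
  have hval : ∫ x, Real.log ((μ[ρ | MeasurableSpace.comap T m]) x) ∂μ =
      -∫ x, (g x).toReal * Real.log ((g x).toReal) ∂μ := by
    rw [integral_congr_ae hlogc, integral_neg]
    congr 1
    rw [← integral_map hT.aemeasurable (hgm.ennreal_toReal.log).aestronglyMeasurable,
      ← hmapμ, hgNN, integral_withDensity_eq_integral_smul (hgm.ennreal_toNNReal) _]
    apply integral_congr_ae
    filter_upwards with x
    rw [NNReal.smul_def]
    norm_num [ENNReal.coe_toNNReal_eq_toReal]
  rw [relEntropy, if_pos ⟨hac, hint⟩, hval, neg_neg]
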